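/- Let λ ∈ (0,1) and let f, g : ℝ → ℝ≥0 be measurable with all superlevel sets {f > t} and {g > t} being open intervals (possibly empty). Suppose further that for t ∈ (ε₀, T₀) the superlevel sets are given by {f > t} = (a_f(log t), b_f(log t)) and {g > t} = (a_g(log t), b_g(log t)), where a_f, a_g are convex functions and b_f, b_g are concave functions of log t on (log ε₀, log T₀). Then the functions with these level sets are log-concave on the corresponding range. More precisely: if φ : ℝ → ℝ≥0 satisfies {φ > t} = (𝔞(log t), 𝔟(log t)) for t in a multiplicative interval, with 𝔞 convex and 𝔟 concave, and {φ > t} = ∅ above the interval, then φ is log-concave. -/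
import Mathlib


open MeasureTheory

/-- A function `φ : ℝ → ℝ≥0` is log-concave. -/
def IsLogConcave (φ : ℝ → ℝ) : Prop :=
  ∀ x y t : ℝ, t ∈ Set.Ioo (0:ℝ) 1 → φ x ^ (1 - t) * φ y ^ t ≤ φ ((1 - t) * x + t * y)

/-- If the superlevel sets of `φ` are given by `(𝔞(log t), 𝔟(log t))` with `𝔞` convex and
`𝔟` concave on a multiplicative interval, empty above the interval, and equal to the support
below it, then `φ` is log-concave. -/
theorem log_concave_of_level_sets (ε₀ T₀ : ℝ) (hε₀ : 0 < ε₀) (hεT : ε₀ < T₀)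
    (φ : ℝ → ℝ) (hφ0 : ∀ x, 0 ≤ φ x) (a b : ℝ → ℝ)
    (ha : ConvexOn ℝ (Set.Ioo (Real.log ε₀) (Real.log T₀)) a)
    (hb : ConcaveOn ℝ (Set.Ioo (Real.log ε₀) (Real.log T₀)) b)
    (hlevel : ∀ t ∈ Set.Ioo ε₀ T₀,
      {x | t < φ x} = Set.Ioo (a (Real.log t)) (b (Real.log t)))
    (habove : ∀ t : ℝ, T₀ ≤ t → {x | t < φ x} = ∅)
    (hbelow : ∀ t : ℝ, 0 < t → t ≤ ε₀ →
      {x | t < φ x} = ⋃ s ∈ Set.Ioo ε₀ T₀, Set.Ioo (a (Real.log s)) (b (Real.log s))) :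
    IsLogConcave φ := by
  intro x y t ht
  obtain ⟨ht0, ht1⟩ := ht
  have h1t : (0:ℝ) < 1 - t := by linarith
  -- everywhere φ ≤ T₀
  have hle : ∀ w, φ w ≤ T₀ := by
    intro w
    by_contra h
    push_neg at h
    have : w ∈ {x | T₀ < φ x} := h
    rw [habove T₀ le_rfl] at this
    exact this
  -- any point with positive value has value > ε₀
  have key : ∀ w, 0 < φ w → ε₀ < φ w := by
    intro w hw
    by_contra h
    push_neg at h
    have hmem : w ∈ {x | φ w / 2 < φ x} := by
      simp only [Set.mem_setOf_eq]; linarith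
    rw [hbelow (φ w / 2) (by linarith) (by linarith)] at hmem
    simp only [Set.mem_iUnion] at hmem
    obtain ⟨s, hs, hws⟩ := hmem
    rw [← hlevel s hs] at hws
    have : s < φ w := hws
    linarith [hs.1]
  rcases eq_or_lt_of_le (hφ0 x) with hx0 | hx0
  · rw [← hx0, Real.zero_rpow (by positivity : (1:ℝ) - t ≠ 0), zero_mul]
    exact hφ0 _
  rcases eq_or_lt_of_le (hφ0 y) with hy0 | hy0
  · rw [← hy0, Real.zero_rpow (ne_of_gt ht0), mul_zero]
    exact hφ0 _
  have hεx : ε₀ < φ x := key x hx0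
  have hεy : ε₀ < φ y := key y hy0
  set M : ℝ := φ x ^ (1 - t) * φ y ^ t with hM
  have hM0 : 0 < M := by positivity
  refine le_of_forall_lt fun c hc => ?_
  -- pick the scaling factor ρ
  set q : ℝ := max (c / M) (max (ε₀ / φ x) (ε₀ / φ y)) with hq
  have hq1 : q < 1 := by
    apply max_lt
    · rw [div_lt_one hM0]; exact hc
    · apply max_lt
      · rw [div_lt_one hx0]; exact hεx
      · rw [div_lt_one hy0]; exact hεy
  set ρ : ℝ := (q + 1) / 2 with hρ
  have hρ1 : ρ < 1 := by rw [hρ]; linarith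
  have hρx : ε₀ / φ x < ρ := by
    have h1 : ε₀ / φ x ≤ q := le_trans (le_max_left _ _) (le_max_right _ _)
    rw [hρ]; linarith
  have hρy : ε₀ / φ y < ρ := by
    have h1 : ε₀ / φ y ≤ q := le_trans (le_max_right _ _) (le_max_right _ _)
    rw [hρ]; linarith
  have hρc : c / M ≤ ρ := by
    have h1 : c / M ≤ q := le_max_left _ _
    rw [hρ]; linarith
  have hρ0 : 0 < ρ := lt_trans (by positivity) hρx
  set v₁ : ℝ := ρ * φ x with hv₁
  set v₂ : ℝ := ρ * φ y with hv₂
  have hv₁ε : ε₀ < v₁ := by rw [hv₁]; rw [div_lt_iff₀ hx0] at hρx; linarith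
  have hv₂ε : ε₀ < v₂ := by rw [hv₂]; rw [div_lt_iff₀ hy0] at hρy; linarith
  have hv₁x : v₁ < φ x := by rw [hv₁]; nlinarith
  have hv₂y : v₂ < φ y := by rw [hv₂]; nlinarith
  have hv₁0 : 0 < v₁ := lt_trans hε₀ hv₁ε
  have hv₂0 : 0 < v₂ := lt_trans hε₀ hv₂ε
  have hv₁T : v₁ < T₀ := lt_of_lt_of_le hv₁x (hle x)
  have hv₂T : v₂ < T₀ := lt_of_lt_of_le hv₂y (hle y)
  set v : ℝ := v₁ ^ (1 - t) * v₂ ^ t with hv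
  have hvval : v = ρ * M := by
    rw [hv, hv₁, hv₂, Real.mul_rpow hρ0.le (hφ0 x), Real.mul_rpow hρ0.le (hφ0 y), hM]
    rw [show ρ ^ (1 - t) * (φ x ^ (1 - t)) * (ρ ^ t * φ y ^ t)
        = (ρ ^ (1 - t) * ρ ^ t) * (φ x ^ (1 - t) * φ y ^ t) by ring]
    rw [← Real.rpow_add hρ0]
    norm_num
  have hvε : ε₀ < v := by
    rw [hv]
    calc ε₀ = ε₀ ^ (1 - t) * ε₀ ^ t := by
          rw [← Real.rpow_add hε₀]; norm_num
      _ < v₁ ^ (1 - t) * v₂ ^ t := by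
          apply mul_lt_mul'' (Real.rpow_lt_rpow hε₀.le hv₁ε h1t)
            (Real.rpow_lt_rpow hε₀.le hv₂ε ht0) (by positivity) (by positivity)
  have hvT : v < T₀ := by
    rw [hvval]
    calc ρ * M < 1 * M := by nlinarith
      _ = M := one_mul M
      _ ≤ T₀ ^ (1 - t) * T₀ ^ t := by
          rw [hM]
          exact mul_le_mul (Real.rpow_le_rpow (hφ0 x) (hle x) h1t.le)
            (Real.rpow_le_rpow (hφ0 y) (hle y) ht0.le) (by positivity)
            (Real.rpow_nonneg (lt_trans hε₀ hεT).le _)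
      _ = T₀ := by rw [← Real.rpow_add (lt_trans hε₀ hεT)]; norm_num
  have hcv : c ≤ v := by
    rw [hvval]
    calc c = (c / M) * M := (div_mul_cancel₀ c hM0.ne').symm
      _ ≤ ρ * M := mul_le_mul_of_nonneg_right hρc hM0.le
  -- membership of x and y in the level-set intervals
  have hxmem : x ∈ Set.Ioo (a (Real.log v₁)) (b (Real.log v₁)) := by
    rw [← hlevel v₁ ⟨hv₁ε, hv₁T⟩]; exact hv₁x
  have hymem : y ∈ Set.Ioo (a (Real.log v₂)) (b (Real.log v₂)) := by
    rw [← hlevel v₂ ⟨hv₂ε, hv₂T⟩]; exact hv₂y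
  have hlogv : Real.log v = (1 - t) * Real.log v₁ + t * Real.log v₂ := by
    rw [hv, Real.log_mul (by positivity) (by positivity),
      Real.log_rpow hv₁0, Real.log_rpow hv₂0]
  have hl₁ : Real.log v₁ ∈ Set.Ioo (Real.log ε₀) (Real.log T₀) :=
    ⟨Real.log_lt_log hε₀ hv₁ε, Real.log_lt_log hv₁0 hv₁T⟩
  have hl₂ : Real.log v₂ ∈ Set.Ioo (Real.log ε₀) (Real.log T₀) :=
    ⟨Real.log_lt_log hε₀ hv₂ε, Real.log_lt_log hv₂0 hv₂T⟩
  have hconva := ha.2 hl₁ hl₂ h1t.le ht0.le (by ring)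
  have hconcb := hb.2 hl₁ hl₂ h1t.le ht0.le (by ring)
  simp only [smul_eq_mul] at hconva hconcb
  rw [← hlogv] at hconva hconcb
  have hzmem : (1 - t) * x + t * y ∈ Set.Ioo (a (Real.log v)) (b (Real.log v)) := by
    constructor
    · calc a (Real.log v) ≤ (1 - t) * a (Real.log v₁) + t * a (Real.log v₂) := hconva
        _ < (1 - t) * x + t * y :=
            add_lt_add (mul_lt_mul_of_pos_left hxmem.1 h1t)
              (mul_lt_mul_of_pos_left hymem.1 ht0)
    · calc (1 - t) * x + t * y < (1 - t) * b (Real.log v₁) + t * b (Real.log v₂) :=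
            add_lt_add (mul_lt_mul_of_pos_left hxmem.2 h1t)
              (mul_lt_mul_of_pos_left hymem.2 ht0)
        _ ≤ b (Real.log v) := hconcb
  rw [← hlevel v ⟨hvε, hvT⟩] at hzmem
  exact lt_of_le_of_lt hcv hzmem
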